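/- Let M be a contact manifold with contact form β, 2-form Ω whose restriction to Ker(β)×Ker(β) is nondegenerate, and Reeb field E (β(E)=1, i_EΩ=0). Then the alternating bilinear form Ω̃ = Ω̄ + (δ1)∧β̃ on D(M) is nondegenerate: the map φ ↦ i_φΩ̃ is an isomorphism of C^∞(M)-modules from D(M) onto its dual D(M)*. Explicitly, the inverse sends a linear form ν to φ = ν(E) + X - ν(1)·E, where X ∈ Ker(β) is the unique element with i_XΩ = ν|_{Ker(β)}. -/

import Mathlib

open LinearMap

set_option linter.unusedSectionVars false
set_option linter.unusedVariables false

section Prelim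

variable (K A : Type*) [Field K] [CharZero K] [CommRing A] [Algebra K A]

/-- A differential operator of order at most 1 on `A`. -/
def IsDiff1 (φ : A →ₗ[K] A) : Prop :=
  ∀ a b : A, φ (a * b) = a * φ b + b * φ a - a * b * φ 1

variable {K A}

/-- The commutator bracket of two endomorphisms. -/
def opBracket (φ ψ : A →ₗ[K] A) : A →ₗ[K] A := φ ∘ₗ ψ - ψ ∘ₗ φ

theorem isDiff1_mulLeft (f : A) : IsDiff1 K A (LinearMap.mulLeft K f) := by
  intro a b; simp only [LinearMap.mulLeft_apply, mul_one]; ring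

theorem IsDiff1.opBracket {φ ψ : A →ₗ[K] A} (hφ : IsDiff1 K A φ) (hψ : IsDiff1 K A ψ) :
    IsDiff1 K A (_root_.opBracket φ ψ) := by
  intro a b
  simp only [_root_.opBracket, LinearMap.sub_apply, LinearMap.comp_apply]
  rw [hψ a b, hφ a b]
  simp only [map_add, map_sub]
  rw [hφ a (ψ b), hφ b (ψ a), hφ (a * b) (ψ 1), hψ a (φ b), hψ b (φ a), hψ (a * b) (φ 1),
    hφ a b, hψ a b]
  ring

variable (K A) in
/-- The `A`-module `Diff_K(A)` of differential operators of order at most 1 on `A`. -/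
def Diff1 : Submodule A (A →ₗ[K] A) where
  carrier := {φ | IsDiff1 K A φ}
  add_mem' := by
    intro φ ψ hφ hψ a b
    simp only [LinearMap.add_apply, hφ a b, hψ a b]; ring
  zero_mem' := by intro a b; simp
  smul_mem' := by
    intro c φ hφ a b
    simp only [LinearMap.smul_apply, smul_eq_mul, hφ a b]; ring

/-- The commutator bracket on `Diff1`. -/
def Diff1.bk (φ ψ : Diff1 K A) : Diff1 K A :=
  ⟨opBracket φ.1 ψ.1, IsDiff1.opBracket φ.2 ψ.2⟩

variable (K) in
/-- The multiplication operator by `f`, as a differential operator of order `≤ 1`. -/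
def Diff1.const (f : A) : Diff1 K A := ⟨LinearMap.mulLeft K f, isDiff1_mulLeft f⟩

/-- Evaluation at the unit: the linear form `δ1 : φ ↦ φ(1)` on `Diff1`. -/
def ev1 : Diff1 K A →ₗ[A] A where
  toFun φ := φ.1 1
  map_add' φ ψ := rfl
  map_smul' c φ := rfl

end Prelim

section Mfd

open scoped Manifold

local notation "∞" => (⊤ : ℕ∞)

variable {EM : Type*} [NormedAddCommGroup EM] [NormedSpace ℝ EM]
  {HM : Type*} [TopologicalSpace HM] {I : ModelWithCorners ℝ EM HM}
  {M : Type*} [TopologicalSpace M] [ChartedSpace HM M] [IsManifold I ∞ M]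

set_option maxHeartbeats 2000000 in
theorem stmt15 (βt : Diff1 ℝ C^∞⟮I, M; ℝ⟯ →ₗ[C^∞⟮I, M; ℝ⟯] C^∞⟮I, M; ℝ⟯) (hβc : ∀ f : C^∞⟮I, M; ℝ⟯, βt (Diff1.const ℝ f) = 0)
    (E : Diff1 ℝ C^∞⟮I, M; ℝ⟯) (hE1 : E.1 1 = 0) (hβE : βt E = 1)
    (Ωb : Diff1 ℝ C^∞⟮I, M; ℝ⟯ →ₗ[C^∞⟮I, M; ℝ⟯] Diff1 ℝ C^∞⟮I, M; ℝ⟯ →ₗ[C^∞⟮I, M; ℝ⟯] C^∞⟮I, M; ℝ⟯)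
    (hΩalt : ∀ φ : Diff1 ℝ C^∞⟮I, M; ℝ⟯, Ωb φ φ = 0)
    (hΩc : ∀ (f : C^∞⟮I, M; ℝ⟯) (ψ : Diff1 ℝ C^∞⟮I, M; ℝ⟯), Ωb (Diff1.const ℝ f) ψ = 0)
    (hΩE : ∀ ψ : Diff1 ℝ C^∞⟮I, M; ℝ⟯, Ωb E ψ = 0)
    (hnd : ∀ ν : Diff1 ℝ C^∞⟮I, M; ℝ⟯ →ₗ[C^∞⟮I, M; ℝ⟯] C^∞⟮I, M; ℝ⟯, ∃! X : Diff1 ℝ C^∞⟮I, M; ℝ⟯,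
      (X.1 1 = 0 ∧ βt X = 0) ∧ ∀ Y : Diff1 ℝ C^∞⟮I, M; ℝ⟯, Y.1 1 = 0 → βt Y = 0 → Ωb X Y = ν Y) :
    (∀ φ : Diff1 ℝ C^∞⟮I, M; ℝ⟯, (∀ ψ : Diff1 ℝ C^∞⟮I, M; ℝ⟯, (Ωb φ ψ + ((φ).1 1 * βt ψ - (ψ).1 1 * βt φ)) = 0) → φ = 0) ∧
      ∀ ν : Diff1 ℝ C^∞⟮I, M; ℝ⟯ →ₗ[C^∞⟮I, M; ℝ⟯] C^∞⟮I, M; ℝ⟯, ∀ X : Diff1 ℝ C^∞⟮I, M; ℝ⟯, X.1 1 = 0 → βt X = 0 →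
        (∀ Y : Diff1 ℝ C^∞⟮I, M; ℝ⟯, Y.1 1 = 0 → βt Y = 0 → Ωb X Y = ν Y) →
        ∀ ψ : Diff1 ℝ C^∞⟮I, M; ℝ⟯, (Ωb (Diff1.const ℝ (ν E) + X - ν (Diff1.const ℝ (1 : C^∞⟮I, M; ℝ⟯)) • E) ψ + (((Diff1.const ℝ (ν E) + X - ν (Diff1.const ℝ (1 : C^∞⟮I, M; ℝ⟯)) • E)).1 1 * βt ψ - (ψ).1 1 * βt (Diff1.const ℝ (ν E) + X - ν (Diff1.const ℝ (1 : C^∞⟮I, M; ℝ⟯)) • E))) = ν ψ := by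
  set A := C^∞⟮I, M; ℝ⟯
  have anti : ∀ φ ψ : Diff1 ℝ A, Ωb φ ψ = -Ωb ψ φ := by
    intro φ ψ
    have h := hΩalt (φ + ψ)
    simp only [map_add, LinearMap.add_apply, hΩalt] at h
    have : Ωb φ ψ + Ωb ψ φ = 0 := by linear_combination h
    linear_combination this
  have hconst1 : ∀ f : A, (Diff1.const ℝ f).1 1 = f := by
    intro f; simp [Diff1.const]
  have hconst_smul : ∀ f : A, Diff1.const ℝ f = f • Diff1.const ℝ (1 : A) := by
    intro f
    apply Subtype.ext
    ext a
    simp [Diff1.const]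
  have hsmul1 : ∀ (c : A) (φ : Diff1 ℝ A), ((c • φ : Diff1 ℝ A)).1 1 = c * φ.1 1 := by
    intro c φ; rw [SetLike.val_smul, LinearMap.smul_apply, smul_eq_mul]
  have hΩE' : ∀ ψ : Diff1 ℝ A, Ωb ψ E = 0 := by
    intro ψ; rw [anti, hΩE, neg_zero]
  have hΩc' : ∀ (f : A) (ψ : Diff1 ℝ A), Ωb ψ (Diff1.const ℝ f) = 0 := by
    intro f ψ; rw [anti, hΩc, neg_zero]
  constructor
  · intro φ hφ
    have h1 : φ.1 1 = 0 := by
      have := hφ E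
      rw [hΩE', hβE, hE1] at this
      linear_combination this
    have h2 : βt φ = 0 := by
      have := hφ (Diff1.const ℝ 1)
      rw [hΩc', hβc, hconst1, h1] at this
      linear_combination -this
    obtain ⟨X0, _, huniq⟩ := hnd 0
    have hφX : φ = X0 := by
      apply huniq
      refine ⟨⟨h1, h2⟩, ?_⟩
      intro Y hY1 hYβ
      have := hφ Y
      rw [h1, h2, hYβ] at this
      show Ωb φ Y = (0 : Diff1 ℝ A →ₗ[A] A) Y
      rw [LinearMap.zero_apply]
      linear_combination this
    have h0X : (0 : Diff1 ℝ A) = X0 := by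
      apply huniq
      refine ⟨⟨?_, map_zero _⟩, ?_⟩
      · show (0 : A →ₗ[ℝ] A) 1 = 0; rw [LinearMap.zero_apply]
      intro Y hY1 hYβ
      rw [map_zero, LinearMap.zero_apply]
    rw [hφX, ← h0X]
  · intro ν X hX1 hXβ hXΩ ψ
    set Y : Diff1 ℝ A := ψ - Diff1.const ℝ (ψ.1 1) - βt ψ • E with hYdef
    have hY1 : Y.1 1 = 0 := by
      rw [hYdef]
      simp only [AddSubgroupClass.coe_sub, SetLike.val_smul, LinearMap.sub_apply,
        LinearMap.smul_apply, smul_eq_mul, hconst1, hE1]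
      ring
    have hYβ : βt Y = 0 := by
      rw [hYdef, map_sub βt (ψ - Diff1.const ℝ (ψ.1 1)) (βt ψ • E), map_sub βt ψ (Diff1.const ℝ (ψ.1 1)), map_smul, hβc, hβE]
      simp [smul_eq_mul]
    have hψY : ψ = Y + Diff1.const ℝ (ψ.1 1) + βt ψ • E := by
      rw [hYdef]; abel
    have key := hXΩ Y hY1 hYβ
    have hνc : ν (Diff1.const ℝ (ψ.1 1)) = ψ.1 1 * ν (Diff1.const ℝ (1 : A)) := by
      rw [hconst_smul (ψ.1 1), map_smul, smul_eq_mul]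
    have hφΩ : Ωb (Diff1.const ℝ (ν E) + X - ν (Diff1.const ℝ (1 : A)) • E) ψ = ν Y := by
      rw [map_sub Ωb (Diff1.const ℝ (ν E) + X) (ν (Diff1.const ℝ (1 : A)) • E), map_add, LinearMap.sub_apply, LinearMap.add_apply, hΩc, map_smul,
        LinearMap.smul_apply, hΩE, smul_zero, zero_add, sub_zero]
      conv_lhs => rw [hψY]
      rw [map_add, map_add, hΩc', map_smul, hΩE', smul_zero, add_zero, add_zero, key]
    have hφ1 : ((Diff1.const ℝ (ν E) + X - ν (Diff1.const ℝ (1 : A)) • E)).1 1 = ν E := by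
      simp only [AddSubgroupClass.coe_sub, Submodule.coe_add, SetLike.val_smul,
        LinearMap.sub_apply, LinearMap.add_apply, LinearMap.smul_apply, smul_eq_mul,
        hconst1, hX1, hE1]
      ring
    have hφβ : βt (Diff1.const ℝ (ν E) + X - ν (Diff1.const ℝ (1 : A)) • E)
        = -ν (Diff1.const ℝ (1 : A)) := by
      rw [map_sub βt (Diff1.const ℝ (ν E) + X) (ν (Diff1.const ℝ (1 : A)) • E), map_add, hβc, hXβ, map_smul, hβE]
      simp [smul_eq_mul]
    rw [hφΩ, hφ1, hφβ]
    have hνψ : ν ψ = ν Y + ψ.1 1 * ν (Diff1.const ℝ (1 : A)) + βt ψ * ν E := by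
      conv_lhs => rw [hψY]
      rw [map_add, map_add, map_smul, hνc, smul_eq_mul]
    rw [hνψ]; ring
end Mfd
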